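/- Let α > 1 be an irrational real number. Then as t → 0⁺, the second derivative L_α''(t) satisfies L_α''(t) = π²/(3αt³) + O(1/t²). -/

import Mathlib

open Filter Topology Real Asymptotics MeasureTheory Set

set_option maxHeartbeats 1000000

/-- `L_α(t) = -∑_{ℓ ≥ 1} log(1 - e^{-t⌊αℓ⌋})`. -/
noncomputable def LBeatty (α : ℝ) (t : ℝ) : ℝ :=
  -∑' ℓ : ℕ, Real.log (1 - Real.exp (-t * (⌊α * (ℓ + 1)⌋ : ℤ)))

namespace Stmt8Aux

/-- Real value of the Beatty term. -/
noncomputable def c (α : ℝ) (ℓ : ℕ) : ℝ := ((⌊α * ((ℓ : ℝ) + 1)⌋ : ℤ) : ℝ)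

noncomputable def F (x : ℝ) : ℝ := x ^ 2 * Real.exp (-x) / (1 - Real.exp (-x)) ^ 2

variable {α : ℝ}

lemma c_le (hα : 1 < α) (ℓ : ℕ) : c α ℓ ≤ α * (ℓ + 1) := by
  have := Int.floor_le (α * ((ℓ : ℝ) + 1))
  simpa [c] using this

lemma c_ge (hα : 1 < α) (ℓ : ℕ) : α * (ℓ + 1) - 1 ≤ c α ℓ := by
  have := Int.sub_one_lt_floor (α * ((ℓ : ℝ) + 1))
  have := (Int.sub_one_lt_floor (α * ((ℓ : ℝ) + 1))).le
  simpa [c] using this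

lemma c_ge_nat (hα : 1 < α) (ℓ : ℕ) : (ℓ : ℝ) + 1 ≤ c α ℓ := by
  have h : ((ℓ : ℤ) + 1 : ℤ) ≤ ⌊α * ((ℓ : ℝ) + 1)⌋ :=
    Int.le_floor.mpr (by push_cast; nlinarith [Nat.cast_nonneg (α := ℝ) ℓ])
  unfold c
  exact_mod_cast h

lemma c_pos (hα : 1 < α) (ℓ : ℕ) : 0 < c α ℓ :=
  lt_of_lt_of_le (by positivity) (c_ge_nat hα ℓ)

lemma one_le_c (hα : 1 < α) (ℓ : ℕ) : 1 ≤ c α ℓ :=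
  le_trans (by simp [Nat.cast_nonneg]) (c_ge_nat hα ℓ)

lemma c_ge_mul (hα : 1 < α) (ℓ : ℕ) : α * ℓ ≤ c α ℓ := by
  have := c_ge hα ℓ
  nlinarith [Nat.cast_nonneg (α := ℝ) ℓ]

lemma mul_sinh_le {u v : ℝ} (hu : 0 ≤ u) (huv : u ≤ v) :
    v * Real.sinh u ≤ u * Real.sinh v := by
  have hv : 0 ≤ v := hu.trans huv
  refine hasSum_le (fun n => ?_) ((Real.hasSum_sinh u).mul_left v)
    ((Real.hasSum_sinh v).mul_left u)
  have hfac : (0 : ℝ) < (Nat.factorial (2 * n + 1) : ℝ) :=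
    Nat.cast_pos.2 (Nat.factorial_pos _)
  rw [mul_div_assoc', mul_div_assoc', div_le_div_iff_of_pos_right hfac]
  have hp : u ^ (2 * n) ≤ v ^ (2 * n) := pow_le_pow_left₀ hu huv _
  calc v * u ^ (2 * n + 1) = (u * v) * u ^ (2 * n) := by ring
    _ ≤ (u * v) * v ^ (2 * n) := by
        exact mul_le_mul_of_nonneg_left hp (mul_nonneg hu hv)
    _ = u * v ^ (2 * n + 1) := by ring

lemma one_sub_exp_eq (x : ℝ) :
    1 - Real.exp (-x) = 2 * Real.exp (-(x / 2)) * Real.sinh (x / 2) := by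
  rw [Real.sinh_eq]
  have h1 : Real.exp (-(x / 2)) * Real.exp (x / 2) = 1 := by
    rw [← Real.exp_add]; norm_num
  have h2 : Real.exp (-(x / 2)) * Real.exp (-(x / 2)) = Real.exp (-x) := by
    rw [← Real.exp_add]; congr 1; ring
  linear_combination -h1 + h2

lemma exp_neg_lt_one {x : ℝ} (hx : 0 < x) : Real.exp (-x) < 1 := by
  rw [Real.exp_lt_one_iff]; linarith

lemma one_sub_exp_pos {x : ℝ} (hx : 0 < x) : 0 < 1 - Real.exp (-x) := by
  linarith [exp_neg_lt_one hx]

lemma F_eq {x : ℝ} (hx : 0 < x) : F x = x ^ 2 / (4 * Real.sinh (x / 2) ^ 2) := by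
  have hs : 0 < Real.sinh (x / 2) := Real.sinh_pos_iff.2 (by linarith)
  have he : Real.exp (-(x / 2)) ^ 2 = Real.exp (-x) := by
    rw [sq, ← Real.exp_add]; congr 1; ring
  unfold F
  rw [one_sub_exp_eq x, mul_pow, mul_pow, he]
  have hepos : (0 : ℝ) < Real.exp (-x) := Real.exp_pos _
  field_simp
  ring

lemma F_pos {x : ℝ} (hx : 0 < x) : 0 < F x := by
  rw [F_eq hx]
  have hs : 0 < Real.sinh (x / 2) := Real.sinh_pos_iff.2 (by linarith)
  positivity

lemma F_nonneg {x : ℝ} (hx : 0 < x) : 0 ≤ F x := (F_pos hx).le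

lemma F_le_one {x : ℝ} (hx : 0 < x) : F x ≤ 1 := by
  rw [F_eq hx]
  have hs : x / 2 < Real.sinh (x / 2) := Real.self_lt_sinh_iff.2 (by linarith)
  have hs0 : 0 < Real.sinh (x / 2) := Real.sinh_pos_iff.2 (by linarith)
  rw [div_le_one (by positivity)]
  nlinarith

lemma F_anti {x y : ℝ} (hx : 0 < x) (hxy : x ≤ y) : F y ≤ F x := by
  have hy : 0 < y := lt_of_lt_of_le hx hxy
  rw [F_eq hx, F_eq hy]
  have hsx : 0 < Real.sinh (x / 2) := Real.sinh_pos_iff.2 (by linarith)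
  have hsy : 0 < Real.sinh (y / 2) := Real.sinh_pos_iff.2 (by linarith)
  rw [div_le_div_iff₀ (by positivity) (by positivity)]
  have key : y * Real.sinh (x / 2) ≤ x * Real.sinh (y / 2) := by
    have := mul_sinh_le (u := x / 2) (v := y / 2) (by linarith) (by linarith)
    linarith
  have h1 : 0 ≤ y * Real.sinh (x / 2) := by positivity
  nlinarith [mul_self_le_mul_self h1 key]


lemma F_measurable : Measurable F := by
  unfold F
  fun_prop

lemma x2exp_integrable : IntegrableOn (fun x : ℝ => x ^ 2 * Real.exp (-x)) (Ioi 0) := by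
  have h := Real.GammaIntegral_convergent (s := 3) (by norm_num)
  refine (h.congr_fun (fun x hx => ?_) measurableSet_Ioi)
  have hx : (0 : ℝ) < x := hx
  beta_reduce
  rw [show (3 : ℝ) - 1 = ((2 : ℕ) : ℝ) by norm_num, Real.rpow_natCast]
  ring

lemma F_integrable : IntegrableOn F (Ioi 0) := by
  have h1 : IntegrableOn F (Ioc 0 1) := by
    refine Measure.integrableOn_of_bounded (M := 1) (by simp) F_measurable.aestronglyMeasurable ?_
    refine (ae_restrict_iff' measurableSet_Ioc).2 (ae_of_all _ fun x hx => ?_)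
    rw [Real.norm_eq_abs, abs_of_nonneg (F_nonneg hx.1)]
    exact F_le_one hx.1
  have h2 : IntegrableOn F (Ioi 1) := by
    have hint : IntegrableOn (fun x : ℝ => x ^ 2 * Real.exp (-x) / (1 - Real.exp (-1)) ^ 2)
        (Ioi 1) :=
      (x2exp_integrable.mono_set (Ioi_subset_Ioi zero_le_one)).div_const _
    refine Integrable.mono hint F_measurable.aestronglyMeasurable ?_
    refine (ae_restrict_iff' measurableSet_Ioi).2 (ae_of_all _ fun x hx => ?_)
    have hx1 : (1 : ℝ) < x := hx
    have hx0 : (0 : ℝ) < x := by linarith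
    have hd : 1 - Real.exp (-1 : ℝ) ≤ 1 - Real.exp (-x) := by
      have : Real.exp (-x) ≤ Real.exp (-1 : ℝ) := Real.exp_le_exp.2 (by linarith)
      linarith
    have hd1 : (0 : ℝ) < 1 - Real.exp (-1 : ℝ) := one_sub_exp_pos one_pos
    rw [Real.norm_eq_abs, abs_of_nonneg (F_nonneg hx0), Real.norm_eq_abs]
    unfold F
    rw [abs_of_nonneg (by positivity)]
    apply div_le_div_of_nonneg_left (by positivity) (by positivity)
    exact pow_le_pow_left₀ hd1.le hd 2
  have := h1.union h2
  rwa [Set.Ioc_union_Ioi_eq_Ioi zero_le_one] at this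

/-- The summand functions in the series for `F`. -/
noncomputable def fk (k : ℕ) (x : ℝ) : ℝ := (k : ℝ) * (x ^ 2 * Real.exp (-((k : ℝ) * x)))

lemma fk_measurable (k : ℕ) : Measurable (fk k) := by
  unfold fk; fun_prop

lemma fk_nonneg (k : ℕ) (x : ℝ) (hx : 0 ≤ x) : 0 ≤ fk k x := by
  unfold fk; positivity

lemma hasSum_fk {x : ℝ} (hx : 0 < x) : HasSum (fun k : ℕ => fk k x) (F x) := by
  have hr : ‖Real.exp (-x)‖ < 1 := by
    rw [Real.norm_eq_abs, abs_of_pos (Real.exp_pos _)]; exact exp_neg_lt_one hx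
  have h := (hasSum_coe_mul_geometric_of_norm_lt_one hr).mul_left (x ^ 2)
  have heq : ∀ k : ℕ, x ^ 2 * ((k : ℝ) * Real.exp (-x) ^ k) = fk k x := by
    intro k
    rw [← Real.exp_nat_mul]
    unfold fk
    rw [show (k : ℝ) * -x = -((k : ℝ) * x) by ring]
    ring
  rw [show F x = x ^ 2 * (Real.exp (-x) / (1 - Real.exp (-x)) ^ 2) by unfold F; ring]
  exact h.congr_fun (fun k => (heq k).symm)

lemma fk_integrable (k : ℕ) : IntegrableOn (fk k) (Ioi 0) := by
  rcases Nat.eq_zero_or_pos k with hk | hk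
  · subst hk
    have hz : fk 0 = fun _ : ℝ => (0 : ℝ) := by funext x; simp [fk]
    rw [hz]
    exact integrableOn_zero
  · have hk1 : (1 : ℝ) ≤ (k : ℝ) := by exact_mod_cast hk
    refine Integrable.mono (x2exp_integrable.mul_const (k : ℝ))
      ((fk_measurable k).aestronglyMeasurable) ?_
    refine (ae_restrict_iff' measurableSet_Ioi).2 (ae_of_all _ fun x hx => ?_)
    have hx : (0 : ℝ) < x := hx
    have he : Real.exp (-((k : ℝ) * x)) ≤ Real.exp (-x) := by
      apply Real.exp_le_exp.2; nlinarith
    rw [Real.norm_eq_abs, Real.norm_eq_abs, abs_of_nonneg (fk_nonneg k x hx.le),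
      abs_of_nonneg (by positivity)]
    unfold fk
    calc (k : ℝ) * (x ^ 2 * Real.exp (-((k : ℝ) * x)))
        ≤ (k : ℝ) * (x ^ 2 * Real.exp (-x)) := by
          refine mul_le_mul_of_nonneg_left ?_ (by positivity)
          exact mul_le_mul_of_nonneg_left he (by positivity)
      _ = x ^ 2 * Real.exp (-x) * (k : ℝ) := by ring

lemma fk_integral (k : ℕ) : ∫ x in Ioi (0:ℝ), fk k x = 2 / (k : ℝ) ^ 2 := by
  rcases Nat.eq_zero_or_pos k with hk | hk
  · subst hk; simp [fk]
  · have hk0 : (0 : ℝ) < (k : ℝ) := by exact_mod_cast hk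
    unfold fk
    rw [MeasureTheory.integral_const_mul]
    have h := Real.integral_rpow_mul_exp_neg_mul_Ioi (a := 3) (r := (k : ℝ)) (by norm_num) hk0
    have heq : ∫ x in Ioi (0:ℝ), x ^ 2 * Real.exp (-((k : ℝ) * x))
        = ∫ x in Ioi (0:ℝ), x ^ ((3:ℝ) - 1) * Real.exp (-((k : ℝ) * x)) := by
      refine setIntegral_congr_fun measurableSet_Ioi (fun x hx => ?_)
      have hx : (0 : ℝ) < x := hx
      rw [show (3 : ℝ) - 1 = ((2 : ℕ) : ℝ) by norm_num, Real.rpow_natCast]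
    rw [heq, h]
    have hg : Real.Gamma 3 = 2 := by
      rw [show (3 : ℝ) = ((2 : ℕ) : ℝ) + 1 by norm_num, Real.Gamma_nat_eq_factorial]
      norm_num
    rw [hg]
    have h3 : (1 / (k : ℝ)) ^ (3 : ℝ) = (1 / (k : ℝ)) ^ (3 : ℕ) := by
      rw [← Real.rpow_natCast (1 / (k : ℝ)) 3]
      norm_num
    rw [h3]
    field_simp

lemma J_eq : ∫ x in Ioi (0:ℝ), F x = π ^ 2 / 3 := by
  have hswap := MeasureTheory.integral_tsum_of_summable_integral_norm
    (μ := volume.restrict (Ioi (0:ℝ))) (F := fk) (fun k => fk_integrable k) ?_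
  · have h1 : ∫ x in Ioi (0:ℝ), (∑' k, fk k x) = ∫ x in Ioi (0:ℝ), F x := by
      refine setIntegral_congr_fun measurableSet_Ioi (fun x hx => ?_)
      exact (hasSum_fk hx).tsum_eq
    have h2 : ∑' k : ℕ, ∫ x in Ioi (0:ℝ), fk k x = π ^ 2 / 3 := by
      have hz := hasSum_zeta_two.mul_left (2 : ℝ)
      have : ∑' k : ℕ, (2 : ℝ) * (1 / (k:ℝ) ^ 2) = 2 * (π ^ 2 / 6) := hz.tsum_eq
      calc ∑' k : ℕ, ∫ x in Ioi (0:ℝ), fk k x = ∑' k : ℕ, (2 : ℝ) / (k:ℝ) ^ 2 := by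
            exact tsum_congr fk_integral
        _ = ∑' k : ℕ, (2 : ℝ) * (1 / (k:ℝ) ^ 2) := by
            refine tsum_congr fun k => by ring
        _ = 2 * (π ^ 2 / 6) := hz.tsum_eq
        _ = π ^ 2 / 3 := by ring
    rw [← h1, ← hswap, h2]
  · refine Summable.congr (f := fun k : ℕ => (2 : ℝ) / (k:ℝ) ^ 2) ?_ ?_
    · have := hasSum_zeta_two.summable.mul_left (2 : ℝ)
      refine this.congr fun k => by ring
    · intro k
      show (2:ℝ) / (k:ℝ) ^ 2 = _
      rw [← fk_integral k]
      refine (setIntegral_congr_fun measurableSet_Ioi (fun x hx => ?_)).symm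
      rw [Real.norm_eq_abs, abs_of_nonneg (fk_nonneg k x (le_of_lt hx))]


lemma int_Ioc_ge {a b : ℝ} (ha : 0 ≤ a) (hab : a ≤ b) :
    (b - a) * F b ≤ ∫ x in Ioc a b, F x := by
  rcases eq_or_lt_of_le hab with rfl | hab'
  · simp
  have hb : 0 < b := lt_of_le_of_lt ha hab'
  have hint : IntegrableOn F (Ioc a b) :=
    F_integrable.mono_set (fun x hx => lt_of_le_of_lt ha hx.1)
  have := setIntegral_mono_on (f := fun _ => F b) (g := F) (μ := volume)
    (integrableOn_const measure_Ioc_lt_top.ne) hint measurableSet_Ioc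
    (fun x hx => F_anti (lt_of_le_of_lt ha hx.1) hx.2)
  rwa [setIntegral_const, Real.volume_real_Ioc, max_eq_left (by linarith),
    smul_eq_mul] at this

lemma int_Ioc_le {a b : ℝ} (ha : 0 < a) (hab : a ≤ b) :
    ∫ x in Ioc a b, F x ≤ (b - a) * F a := by
  have hint : IntegrableOn F (Ioc a b) :=
    F_integrable.mono_set (fun x hx => lt_of_lt_of_le ha hx.1.le)
  have := setIntegral_mono_on (f := F) (g := fun _ => F a) (μ := volume)
    hint (integrableOn_const measure_Ioc_lt_top.ne) measurableSet_Ioc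
    (fun x hx => F_anti ha hx.1.le)
  rwa [setIntegral_const, Real.volume_real_Ioc, max_eq_left (by linarith),
    smul_eq_mul] at this

lemma int_Ioc_le_len {b : ℝ} (hb : 0 ≤ b) : ∫ x in Ioc (0:ℝ) b, F x ≤ b := by
  have hint : IntegrableOn F (Ioc 0 b) := F_integrable.mono_set (fun x hx => hx.1)
  have := setIntegral_mono_on (f := F) (g := fun _ => (1:ℝ)) (μ := volume)
    hint (integrableOn_const measure_Ioc_lt_top.ne) measurableSet_Ioc
    (fun x hx => F_le_one hx.1)
  rwa [setIntegral_const, Real.volume_real_Ioc, max_eq_left (by linarith),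
    smul_eq_mul, mul_one, sub_zero] at this

lemma int_Ioi_nonneg_ae {e : ℝ} (he : 0 ≤ e) :
    0 ≤ᵐ[volume.restrict (Ioi e)] F := by
  refine (ae_restrict_iff' measurableSet_Ioi).2 (ae_of_all _ fun x hx => ?_)
  exact F_nonneg (lt_of_le_of_lt he hx)

lemma sum_int_adjacent {s e : ℝ} (hs : 0 < s) (he : 0 ≤ e) (L : ℕ) :
    ∑ i ∈ Finset.range L, ∫ x in Ioc (e + s * i) (e + s * (i + 1)), F x
      = ∫ x in Ioc e (e + s * L), F x := by
  induction L with
  | zero => simp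
  | succ M ih =>
    rw [Finset.sum_range_succ, ih]
    push_cast
    have hM : (0:ℝ) ≤ (M:ℝ) := Nat.cast_nonneg M
    have h1 : e ≤ e + s * M := by nlinarith
    have h2 : e + s * M ≤ e + s * ((M:ℝ) + 1) := by nlinarith
    have hsub1 : Ioc e (e + s * (M:ℝ)) ⊆ Ioi (0:ℝ) := fun x hx => lt_of_le_of_lt he hx.1
    have hsub2 : Ioc (e + s * (M:ℝ)) (e + s * ((M:ℝ) + 1)) ⊆ Ioi (0:ℝ) := fun x hx =>
      lt_of_le_of_lt (le_trans he h1) hx.1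
    rw [← setIntegral_union (Set.Ioc_disjoint_Ioc_of_le le_rfl) measurableSet_Ioc
      (F_integrable.mono_set hsub1) (F_integrable.mono_set hsub2),
      Set.Ioc_union_Ioc_eq_Ioc h1 h2]

lemma summable_shift (k : ℕ) {r : ℝ} (h0 : 0 ≤ r) (h1 : r < 1) :
    Summable (fun ℓ : ℕ => ((ℓ:ℝ) + 1) ^ k * r ^ (ℓ + 1)) := by
  have h := summable_pow_mul_geometric_of_norm_lt_one (R := ℝ) k
    (r := r) (by rwa [Real.norm_eq_abs, abs_of_nonneg h0])
  have h2 := h.comp_injective Nat.succ_injective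
  refine h2.congr fun ℓ => ?_
  simp only [Function.comp_apply, Nat.succ_eq_add_one]
  push_cast
  ring

lemma S_summable (hα : 1 < α) {t : ℝ} (ht : 0 < t) :
    Summable (fun ℓ : ℕ => F (t * c α ℓ)) := by
  have hd : 0 < 1 - Real.exp (-t) := one_sub_exp_pos ht
  refine Summable.of_nonneg_of_le (fun ℓ => F_nonneg (mul_pos ht (c_pos hα ℓ)))
    (fun ℓ => ?_)
    (((summable_shift 2 (Real.exp_pos (-t)).le (exp_neg_lt_one ht)).mul_left
      (t ^ 2 / (1 - Real.exp (-t)) ^ 2)))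
  have hy : 0 < t * ((ℓ:ℝ) + 1) := by positivity
  have hty : t ≤ t * ((ℓ:ℝ) + 1) := by nlinarith [Nat.cast_nonneg (α := ℝ) ℓ]
  have h1 : F (t * c α ℓ) ≤ F (t * ((ℓ:ℝ) + 1)) :=
    F_anti hy (mul_le_mul_of_nonneg_left (c_ge_nat hα ℓ) ht.le)
  have hdy : 0 < 1 - Real.exp (-(t * ((ℓ:ℝ) + 1))) := one_sub_exp_pos hy
  have h2 : F (t * ((ℓ:ℝ) + 1))
      ≤ (t * ((ℓ:ℝ) + 1)) ^ 2 * Real.exp (-(t * ((ℓ:ℝ) + 1))) / (1 - Real.exp (-t)) ^ 2 := by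
    unfold F
    apply div_le_div_of_nonneg_left (by positivity) (by positivity)
    exact pow_le_pow_left₀ hd.le (by
      have : Real.exp (-(t * ((ℓ:ℝ) + 1))) ≤ Real.exp (-t) := Real.exp_le_exp.2 (by linarith)
      linarith) 2
  have he : Real.exp (-(t * ((ℓ:ℝ) + 1))) = Real.exp (-t) ^ (ℓ + 1) := by
    rw [← Real.exp_nat_mul]; congr 1; push_cast; ring
  have h3 : (t * ((ℓ:ℝ) + 1)) ^ 2 * Real.exp (-(t * ((ℓ:ℝ) + 1))) / (1 - Real.exp (-t)) ^ 2
      = t ^ 2 / (1 - Real.exp (-t)) ^ 2 * (((ℓ:ℝ) + 1) ^ 2 * Real.exp (-t) ^ (ℓ + 1)) := by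
    rw [he]; field_simp
  linarith

lemma S_upper (hα : 1 < α) {t : ℝ} (ht : 0 < t) :
    ∑' ℓ : ℕ, F (t * c α ℓ) ≤ 1 + (π ^ 2 / 3) / (α * t) := by
  have hα0 : (0:ℝ) < α := by linarith
  set s := α * t with hs_def
  have hs : 0 < s := by positivity
  have hJnn : (0:ℝ) ≤ π ^ 2 / 3 := by positivity
  refine Summable.tsum_le_of_sum_le (S_summable hα ht) fun u => ?_
  obtain ⟨L, hL⟩ := u.exists_nat_subset_range
  refine le_trans (Finset.sum_le_sum_of_subset_of_nonneg hL
    (fun i _ _ => F_nonneg (mul_pos ht (c_pos hα i)))) ?_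
  cases L with
  | zero => simp; positivity
  | succ M =>
    rw [Finset.sum_range_succ']
    have h0 : F (t * c α 0) ≤ 1 := F_le_one (mul_pos ht (c_pos hα 0))
    have hterm : ∀ i : ℕ,
        F (t * c α (i + 1)) ≤ (∫ x in Ioc (s * i) (s * ((i:ℝ) + 1)), F x) / s := by
      intro i
      have hpos : 0 < s * ((i:ℝ) + 1) := by positivity
      have hc : α * ((i:ℝ) + 1) ≤ c α (i + 1) := by
        have := c_ge_mul hα (i + 1)
        push_cast at this
        linarith
      have hle1 : s * ((i:ℝ) + 1) ≤ t * c α (i + 1) := by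
        calc s * ((i:ℝ) + 1) = t * (α * ((i:ℝ) + 1)) := by rw [hs_def]; ring
          _ ≤ t * c α (i + 1) := mul_le_mul_of_nonneg_left hc ht.le
      have hF1 : F (t * c α (i + 1)) ≤ F (s * ((i:ℝ) + 1)) := F_anti hpos hle1
      have hint := int_Ioc_ge (a := s * i) (b := s * ((i:ℝ) + 1))
        (by positivity) (by nlinarith [Nat.cast_nonneg (α := ℝ) i])
      have hlen : s * ((i:ℝ) + 1) - s * i = s := by ring
      rw [hlen] at hint
      rw [le_div_iff₀ hs]
      nlinarith
    have hsum : ∑ i ∈ Finset.range M, F (t * c α (i + 1))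
        ≤ (∫ x in Ioc (0:ℝ) (s * M), F x) / s := by
      calc ∑ i ∈ Finset.range M, F (t * c α (i + 1))
          ≤ ∑ i ∈ Finset.range M, (∫ x in Ioc (s * i) (s * ((i:ℝ) + 1)), F x) / s :=
            Finset.sum_le_sum fun i _ => hterm i
        _ = (∑ i ∈ Finset.range M, ∫ x in Ioc (s * i) (s * ((i:ℝ) + 1)), F x) / s := by
            rw [Finset.sum_div]
        _ = (∫ x in Ioc (0:ℝ) (s * M), F x) / s := by
            have := sum_int_adjacent (s := s) (e := 0) hs le_rfl M
            simp only [zero_add] at this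
            rw [this]
    have hint2 : (∫ x in Ioc (0:ℝ) (s * M), F x) ≤ π ^ 2 / 3 := by
      rw [← J_eq]
      exact setIntegral_mono_set F_integrable (int_Ioi_nonneg_ae le_rfl)
        (HasSubset.Subset.eventuallyLE Set.Ioc_subset_Ioi_self)
    have hd : (∫ x in Ioc (0:ℝ) (s * M), F x) / s ≤ (π ^ 2 / 3) / s :=
      (div_le_div_iff_of_pos_right hs).2 hint2
    linarith

lemma iUnion_Ioc_eq {s : ℝ} (hs : 0 < s) :
    (⋃ L : ℕ, Ioc s (s + s * (L:ℝ))) = Ioi s := by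
  ext x
  simp only [mem_iUnion, mem_Ioc, mem_Ioi]
  constructor
  · rintro ⟨L, h1, _⟩; exact h1
  · intro hx
    obtain ⟨L, hL⟩ := exists_nat_ge ((x - s) / s)
    refine ⟨L, hx, ?_⟩
    rw [div_le_iff₀ hs] at hL
    nlinarith

lemma S_lower (hα : 1 < α) {t : ℝ} (ht : 0 < t) :
    (π ^ 2 / 3) / (α * t) - 1 ≤ ∑' ℓ : ℕ, F (t * c α ℓ) := by
  have hα0 : (0:ℝ) < α := by linarith
  set s := α * t with hs_def
  have hs : 0 < s := by positivity
  have key : ∀ L : ℕ, (∫ x in Ioc s (s + s * (L:ℝ)), F x) / s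
      ≤ ∑' ℓ : ℕ, F (t * c α ℓ) := by
    intro L
    have hterm : ∀ ℓ : ℕ,
        (∫ x in Ioc (s + s * (ℓ:ℝ)) (s + s * ((ℓ:ℝ) + 1)), F x) / s ≤ F (t * c α ℓ) := by
      intro ℓ
      have hℓ : (0:ℝ) ≤ (ℓ:ℝ) := Nat.cast_nonneg ℓ
      have ha : 0 < s + s * (ℓ:ℝ) := by positivity
      have hab : s + s * (ℓ:ℝ) ≤ s + s * ((ℓ:ℝ) + 1) := by nlinarith
      have hint := int_Ioc_le ha hab
      have hlen : (s + s * ((ℓ:ℝ) + 1)) - (s + s * (ℓ:ℝ)) = s := by ring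
      rw [hlen] at hint
      have htc : 0 < t * c α ℓ := mul_pos ht (c_pos hα ℓ)
      have hle : t * c α ℓ ≤ s + s * (ℓ:ℝ) := by
        have := c_le hα ℓ
        calc t * c α ℓ ≤ t * (α * ((ℓ:ℝ) + 1)) := mul_le_mul_of_nonneg_left this ht.le
          _ = s + s * (ℓ:ℝ) := by rw [hs_def]; ring
      have hF : F (s + s * (ℓ:ℝ)) ≤ F (t * c α ℓ) := F_anti htc hle
      rw [div_le_iff₀ hs]
      nlinarith
    have h1 : ∑ ℓ ∈ Finset.range L, (∫ x in Ioc (s + s * (ℓ:ℝ)) (s + s * ((ℓ:ℝ) + 1)), F x) / s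
        ≤ ∑ ℓ ∈ Finset.range L, F (t * c α ℓ) := Finset.sum_le_sum fun ℓ _ => hterm ℓ
    have h2 : ∑ ℓ ∈ Finset.range L, (∫ x in Ioc (s + s * (ℓ:ℝ)) (s + s * ((ℓ:ℝ) + 1)), F x) / s
        = (∫ x in Ioc s (s + s * (L:ℝ)), F x) / s := by
      rw [← Finset.sum_div, sum_int_adjacent hs hs.le]
    have h3 := Summable.sum_le_tsum (Finset.range L)
      (fun ℓ _ => F_nonneg (mul_pos ht (c_pos hα ℓ))) (S_summable hα ht)
    linarith
  have hmono : Monotone (fun L : ℕ => Ioc s (s + s * (L:ℝ))) := by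
    intro a b hab
    apply Ioc_subset_Ioc_right
    have : (a:ℝ) ≤ (b:ℝ) := Nat.cast_le.2 hab
    nlinarith
  have hIint : IntegrableOn F (⋃ L : ℕ, Ioc s (s + s * (L:ℝ))) := by
    rw [iUnion_Ioc_eq hs]
    exact F_integrable.mono_set (Ioi_subset_Ioi hs.le)
  have htend := tendsto_setIntegral_of_monotone (fun L : ℕ => measurableSet_Ioc) hmono hIint
  rw [iUnion_Ioc_eq hs] at htend
  have hlim : (∫ x in Ioi s, F x) / s ≤ ∑' ℓ : ℕ, F (t * c α ℓ) :=
    le_of_tendsto (htend.div_const s) (Eventually.of_forall key)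
  have hsplit : ∫ x in Ioi (0:ℝ), F x = (∫ x in Ioc (0:ℝ) s, F x) + ∫ x in Ioi s, F x := by
    rw [← setIntegral_union Set.Ioc_disjoint_Ioi_same measurableSet_Ioi
      (F_integrable.mono_set (fun x hx => hx.1)) (F_integrable.mono_set (Ioi_subset_Ioi hs.le)),
      Set.Ioc_union_Ioi_eq_Ioi hs.le]
  rw [J_eq] at hsplit
  have h1 := int_Ioc_le_len hs.le
  have h2 : π ^ 2 / 3 - s ≤ ∫ x in Ioi s, F x := by linarith
  have h3 : (π ^ 2 / 3) / s - 1 = (π ^ 2 / 3 - s) / s := by field_simp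
  rw [h3]
  calc (π ^ 2 / 3 - s) / s ≤ (∫ x in Ioi s, F x) / s := (div_le_div_iff_of_pos_right hs).2 h2
    _ ≤ _ := hlim

/-! ### Derivatives of the Beatty series -/

noncomputable def g (α : ℝ) (ℓ : ℕ) (x : ℝ) : ℝ := Real.log (1 - Real.exp (-x * c α ℓ))

noncomputable def h1 (α : ℝ) (ℓ : ℕ) (x : ℝ) : ℝ :=
  c α ℓ * Real.exp (-x * c α ℓ) / (1 - Real.exp (-x * c α ℓ))

noncomputable def h2 (α : ℝ) (ℓ : ℕ) (x : ℝ) : ℝ :=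
  (c α ℓ) ^ 2 * Real.exp (-x * c α ℓ) / (1 - Real.exp (-x * c α ℓ)) ^ 2

lemma LBeatty_eq (α : ℝ) : LBeatty α = fun x => -∑' ℓ : ℕ, g α ℓ x := rfl

lemma exp_term_lt_one (hα : 1 < α) {x : ℝ} (hx : 0 < x) (ℓ : ℕ) :
    Real.exp (-x * c α ℓ) < 1 := by
  rw [Real.exp_lt_one_iff]
  nlinarith [c_pos hα ℓ]

lemma one_sub_exp_term_pos (hα : 1 < α) {x : ℝ} (hx : 0 < x) (ℓ : ℕ) :
    0 < 1 - Real.exp (-x * c α ℓ) := by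
  linarith [exp_term_lt_one hα hx ℓ]

lemma hasDerivAt_exp_term (α : ℝ) (ℓ : ℕ) (x : ℝ) :
    HasDerivAt (fun y : ℝ => 1 - Real.exp (-y * c α ℓ))
      (c α ℓ * Real.exp (-x * c α ℓ)) x := by
  have h0 : HasDerivAt (fun y : ℝ => -y * c α ℓ) (-c α ℓ) x := by
    simpa using ((hasDerivAt_id x).neg.mul_const (c α ℓ))
  have h1 : HasDerivAt (fun y : ℝ => Real.exp (-y * c α ℓ))
      (Real.exp (-x * c α ℓ) * -c α ℓ) x := h0.exp
  have := h1.const_sub 1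
  refine this.congr_deriv ?_
  ring

lemma hasDerivAt_g (hα : 1 < α) (ℓ : ℕ) {x : ℝ} (hx : 0 < x) :
    HasDerivAt (g α ℓ) (h1 α ℓ x) x := by
  have hne : 1 - Real.exp (-x * c α ℓ) ≠ 0 := (one_sub_exp_term_pos hα hx ℓ).ne'
  exact (hasDerivAt_exp_term α ℓ x).log hne

lemma hasDerivAt_h1 (hα : 1 < α) (ℓ : ℕ) {x : ℝ} (hx : 0 < x) :
    HasDerivAt (h1 α ℓ) (-h2 α ℓ x) x := by
  have hne : 1 - Real.exp (-x * c α ℓ) ≠ 0 := (one_sub_exp_term_pos hα hx ℓ).ne'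
  have h0 : HasDerivAt (fun y : ℝ => -y * c α ℓ) (-c α ℓ) x := by
    simpa using ((hasDerivAt_id x).neg.mul_const (c α ℓ))
  have hf : HasDerivAt (fun y : ℝ => c α ℓ * Real.exp (-y * c α ℓ))
      (c α ℓ * (Real.exp (-x * c α ℓ) * -c α ℓ)) x := (h0.exp).const_mul _
  have := hf.div (hasDerivAt_exp_term α ℓ x) hne
  refine this.congr_deriv ?_
  unfold h2
  field_simp
  ring

lemma norm_h1_le (hα : 1 < α) (ℓ : ℕ) {b y : ℝ} (hb : 0 < b) (hy : b ≤ y) :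
    ‖h1 α ℓ y‖ ≤ α / (1 - Real.exp (-b)) * (((ℓ:ℝ) + 1) * Real.exp (-b) ^ (ℓ + 1)) := by
  have hy0 : 0 < y := lt_of_lt_of_le hb hy
  have hc := c_pos hα ℓ
  have hcn := c_ge_nat hα ℓ
  have hd : 0 < 1 - Real.exp (-y * c α ℓ) := one_sub_exp_term_pos hα hy0 ℓ
  have hdb : 0 < 1 - Real.exp (-b) := one_sub_exp_pos hb
  have hdd : 1 - Real.exp (-b) ≤ 1 - Real.exp (-y * c α ℓ) := by
    have : Real.exp (-y * c α ℓ) ≤ Real.exp (-b) := by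
      apply Real.exp_le_exp.2
      nlinarith
    linarith
  have hnum : c α ℓ * Real.exp (-y * c α ℓ) ≤ α * ((ℓ:ℝ) + 1) * Real.exp (-b) ^ (ℓ + 1) := by
    have he : Real.exp (-y * c α ℓ) ≤ Real.exp (-b) ^ (ℓ + 1) := by
      rw [← Real.exp_nat_mul]
      apply Real.exp_le_exp.2
      push_cast
      nlinarith
    have hcle : c α ℓ ≤ α * ((ℓ:ℝ) + 1) := c_le hα ℓ
    have h1 : (0:ℝ) ≤ Real.exp (-y * c α ℓ) := (Real.exp_pos _).le
    nlinarith [Real.exp_pos (-y * c α ℓ), pow_pos (Real.exp_pos (-b)) (ℓ + 1)]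
  rw [Real.norm_eq_abs, abs_of_nonneg (by unfold h1; positivity)]
  unfold h1
  calc c α ℓ * Real.exp (-y * c α ℓ) / (1 - Real.exp (-y * c α ℓ))
      ≤ α * ((ℓ:ℝ) + 1) * Real.exp (-b) ^ (ℓ + 1) / (1 - Real.exp (-b)) :=
        div_le_div₀ (by positivity) hnum hdb hdd
    _ = α / (1 - Real.exp (-b)) * (((ℓ:ℝ) + 1) * Real.exp (-b) ^ (ℓ + 1)) := by ring

lemma norm_h2_le (hα : 1 < α) (ℓ : ℕ) {b y : ℝ} (hb : 0 < b) (hy : b ≤ y) :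
    ‖h2 α ℓ y‖ ≤ α ^ 2 / (1 - Real.exp (-b)) ^ 2
      * (((ℓ:ℝ) + 1) ^ 2 * Real.exp (-b) ^ (ℓ + 1)) := by
  have hy0 : 0 < y := lt_of_lt_of_le hb hy
  have hc := c_pos hα ℓ
  have hcn := c_ge_nat hα ℓ
  have hd : 0 < 1 - Real.exp (-y * c α ℓ) := one_sub_exp_term_pos hα hy0 ℓ
  have hdb : 0 < 1 - Real.exp (-b) := one_sub_exp_pos hb
  have hdd : (1 - Real.exp (-b)) ^ 2 ≤ (1 - Real.exp (-y * c α ℓ)) ^ 2 := by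
    refine pow_le_pow_left₀ hdb.le ?_ 2
    have : Real.exp (-y * c α ℓ) ≤ Real.exp (-b) := by
      apply Real.exp_le_exp.2
      nlinarith
    linarith
  have hnum : (c α ℓ) ^ 2 * Real.exp (-y * c α ℓ)
      ≤ α ^ 2 * ((ℓ:ℝ) + 1) ^ 2 * Real.exp (-b) ^ (ℓ + 1) := by
    have he : Real.exp (-y * c α ℓ) ≤ Real.exp (-b) ^ (ℓ + 1) := by
      rw [← Real.exp_nat_mul]
      apply Real.exp_le_exp.2
      push_cast
      nlinarith
    have hcle : c α ℓ ≤ α * ((ℓ:ℝ) + 1) := c_le hα ℓ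
    have hsq : (c α ℓ) ^ 2 ≤ (α * ((ℓ:ℝ) + 1)) ^ 2 := pow_le_pow_left₀ hc.le hcle 2
    nlinarith [Real.exp_pos (-y * c α ℓ), pow_pos (Real.exp_pos (-b)) (ℓ + 1),
      pow_pos hc 2]
  rw [Real.norm_eq_abs, abs_of_nonneg (by unfold h2; positivity)]
  unfold h2
  calc (c α ℓ) ^ 2 * Real.exp (-y * c α ℓ) / (1 - Real.exp (-y * c α ℓ)) ^ 2
      ≤ α ^ 2 * ((ℓ:ℝ) + 1) ^ 2 * Real.exp (-b) ^ (ℓ + 1) / (1 - Real.exp (-b)) ^ 2 :=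
        div_le_div₀ (by positivity) hnum (by positivity) hdd
    _ = _ := by ring

lemma summable_g (hα : 1 < α) {x : ℝ} (hx : 0 < x) :
    Summable (fun ℓ : ℕ => g α ℓ x) := by
  have hd : 0 < 1 - Real.exp (-x) := one_sub_exp_pos hx
  refine Summable.of_norm_bounded
    (g := fun ℓ : ℕ => 1 / (1 - Real.exp (-x)) * (((ℓ:ℝ) + 1) ^ 0 * Real.exp (-x) ^ (ℓ + 1)))
    ((summable_shift 0 (Real.exp_pos (-x)).le (exp_neg_lt_one hx)).mul_left _) ?_
  intro ℓ
  have hc := c_pos hα ℓ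
  have hcn := c_ge_nat hα ℓ
  have he1 : Real.exp (-x * c α ℓ) < 1 := exp_term_lt_one hα hx ℓ
  have he0 : 0 < Real.exp (-x * c α ℓ) := Real.exp_pos _
  have hd2 : 0 < 1 - Real.exp (-x * c α ℓ) := by linarith
  have hlog : -Real.log (1 - Real.exp (-x * c α ℓ))
      ≤ Real.exp (-x * c α ℓ) / (1 - Real.exp (-x * c α ℓ)) := by
    have h := Real.log_le_sub_one_of_pos (x := (1 - Real.exp (-x * c α ℓ))⁻¹) (by positivity)
    rw [Real.log_inv] at h
    have heq : (1 - Real.exp (-x * c α ℓ))⁻¹ - 1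
        = Real.exp (-x * c α ℓ) / (1 - Real.exp (-x * c α ℓ)) := by
      rw [inv_eq_one_div, div_sub' hd2.ne', div_eq_div_iff hd2.ne' hd2.ne']
      ring
    linarith
  have hlog0 : Real.log (1 - Real.exp (-x * c α ℓ)) ≤ 0 :=
    Real.log_nonpos (by linarith) (by linarith)
  have hnorm : ‖g α ℓ x‖ = -Real.log (1 - Real.exp (-x * c α ℓ)) := by
    unfold g
    rw [Real.norm_eq_abs, abs_of_nonpos hlog0]
  rw [hnorm]
  have hee : Real.exp (-x * c α ℓ) ≤ Real.exp (-x) ^ (ℓ + 1) := by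
    rw [← Real.exp_nat_mul]
    apply Real.exp_le_exp.2
    push_cast
    nlinarith
  have hdd : 1 - Real.exp (-x) ≤ 1 - Real.exp (-x * c α ℓ) := by
    have : Real.exp (-x * c α ℓ) ≤ Real.exp (-x) := by
      apply Real.exp_le_exp.2; nlinarith
    linarith
  calc -Real.log (1 - Real.exp (-x * c α ℓ))
      ≤ Real.exp (-x * c α ℓ) / (1 - Real.exp (-x * c α ℓ)) := hlog
    _ ≤ Real.exp (-x) ^ (ℓ + 1) / (1 - Real.exp (-x)) := div_le_div₀ (by positivity) hee hd hdd
    _ = 1 / (1 - Real.exp (-x)) * (((ℓ:ℝ) + 1) ^ 0 * Real.exp (-x) ^ (ℓ + 1)) := by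
        rw [pow_zero]; ring

lemma summable_h1 (hα : 1 < α) {x : ℝ} (hx : 0 < x) :
    Summable (fun ℓ : ℕ => h1 α ℓ x) := by
  refine Summable.of_norm_bounded
    (g := fun ℓ : ℕ => α / (1 - Real.exp (-x)) * (((ℓ:ℝ) + 1) * Real.exp (-x) ^ (ℓ + 1)))
    ?_ (fun ℓ => norm_h1_le hα ℓ hx le_rfl)
  have := (summable_shift 1 (Real.exp_pos (-x)).le (exp_neg_lt_one hx)).mul_left
    (α / (1 - Real.exp (-x)))
  refine this.congr fun ℓ => by rw [pow_one]

lemma hasDerivAt_L (hα : 1 < α) {x : ℝ} (hx : 0 < x) :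
    HasDerivAt (LBeatty α) (-∑' ℓ : ℕ, h1 α ℓ x) x := by
  rw [LBeatty_eq]
  refine HasDerivAt.neg ?_
  refine hasDerivAt_tsum_of_isPreconnected
    (u := fun ℓ : ℕ => α / (1 - Real.exp (-(x/2))) * (((ℓ:ℝ) + 1) * Real.exp (-(x/2)) ^ (ℓ + 1)))
    ?_ (isOpen_Ioi (a := x/2)) (convex_Ioi _).isPreconnected
    (fun ℓ y hy => hasDerivAt_g hα ℓ ((half_pos hx).trans hy))
    (fun ℓ y hy => norm_h1_le hα ℓ (by linarith) (le_of_lt hy))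
    (y₀ := x) (show x ∈ Ioi (x/2) by rw [mem_Ioi]; linarith) (summable_g hα hx)
    (show x ∈ Ioi (x/2) by rw [mem_Ioi]; linarith)
  have := (summable_shift 1 (Real.exp_pos (-(x/2))).le (exp_neg_lt_one (by linarith))).mul_left
    (α / (1 - Real.exp (-(x/2))))
  refine this.congr fun ℓ => by rw [pow_one]

lemma hasDerivAt_D1 (hα : 1 < α) {x : ℝ} (hx : 0 < x) :
    HasDerivAt (fun y : ℝ => ∑' ℓ : ℕ, h1 α ℓ y) (∑' ℓ : ℕ, -h2 α ℓ x) x := by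
  refine hasDerivAt_tsum_of_isPreconnected
    (u := fun ℓ : ℕ => α ^ 2 / (1 - Real.exp (-(x/2))) ^ 2
      * (((ℓ:ℝ) + 1) ^ 2 * Real.exp (-(x/2)) ^ (ℓ + 1)))
    ?_ (isOpen_Ioi (a := x/2)) (convex_Ioi _).isPreconnected
    (fun ℓ y hy => hasDerivAt_h1 hα ℓ ((half_pos hx).trans hy))
    (fun ℓ y hy => by
      rw [norm_neg]
      exact norm_h2_le hα ℓ (by linarith) (le_of_lt hy))
    (y₀ := x) (show x ∈ Ioi (x/2) by rw [mem_Ioi]; linarith) (summable_h1 hα hx)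
    (show x ∈ Ioi (x/2) by rw [mem_Ioi]; linarith)
  exact (summable_shift 2 (Real.exp_pos (-(x/2))).le (exp_neg_lt_one (by linarith))).mul_left _

lemma deriv2_eq (hα : 1 < α) {t : ℝ} (ht : 0 < t) :
    deriv (deriv (LBeatty α)) t = ∑' ℓ : ℕ, h2 α ℓ t := by
  have hEq : deriv (LBeatty α) =ᶠ[𝓝 t] fun x => -∑' ℓ : ℕ, h1 α ℓ x := by
    filter_upwards [isOpen_Ioi.mem_nhds (show t ∈ Ioi (0:ℝ) from ht)] with x hx
    exact (hasDerivAt_L hα hx).deriv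
  rw [hEq.deriv_eq]
  have h := (hasDerivAt_D1 hα ht).neg
  rw [show (fun x => -∑' ℓ : ℕ, h1 α ℓ x) = -fun y => ∑' ℓ : ℕ, h1 α ℓ y from rfl,
    h.deriv, tsum_neg]
  ring

lemma h2_eq_F (hα : 1 < α) {t : ℝ} (ht : 0 < t) (ℓ : ℕ) :
    h2 α ℓ t = F (t * c α ℓ) / t ^ 2 := by
  have hd : 0 < 1 - Real.exp (-t * c α ℓ) := one_sub_exp_term_pos hα ht ℓ
  unfold h2 F
  rw [neg_mul] at hd ⊢
  field_simp

lemma deriv2_eq_F (hα : 1 < α) {t : ℝ} (ht : 0 < t) :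
    deriv (deriv (LBeatty α)) t = (∑' ℓ : ℕ, F (t * c α ℓ)) / t ^ 2 := by
  rw [deriv2_eq hα ht]
  rw [tsum_congr (fun ℓ => h2_eq_F hα ht ℓ)]
  exact tsum_div_const

end Stmt8Aux

open Stmt8Aux in
theorem stmt8 (α : ℝ) (hα : 1 < α) (hirr : Irrational α) :
    (fun t : ℝ => deriv (deriv (LBeatty α)) t - π ^ 2 / (3 * α * t ^ 3))
      =O[𝓝[>] (0 : ℝ)] (fun t => 1 / t ^ 2) := by
  have hα0 : (0:ℝ) < α := by linarith
  rw [isBigO_iff]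
  refine ⟨1, ?_⟩
  filter_upwards [self_mem_nhdsWithin] with t ht
  have ht : (0:ℝ) < t := ht
  have ht2 : (0:ℝ) < t ^ 2 := by positivity
  have hd2 := deriv2_eq_F hα ht
  have hup := S_upper hα ht
  have hlo := S_lower hα ht
  set S := ∑' ℓ : ℕ, F (t * c α ℓ) with hS
  have hsplit : π ^ 2 / (3 * α * t ^ 3) = ((π ^ 2 / 3) / (α * t)) / t ^ 2 := by
    field_simp
  rw [hd2, hsplit, div_sub_div_same]
  rw [Real.norm_eq_abs, Real.norm_eq_abs, abs_div, abs_of_pos ht2]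
  have habs : |S - (π ^ 2 / 3) / (α * t)| ≤ 1 := abs_le.2 ⟨by linarith, by linarith⟩
  rw [abs_of_pos (show (0:ℝ) < 1 / t ^ 2 by positivity)]
  rw [one_mul]
  exact (div_le_div_iff_of_pos_right ht2).2 habs
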